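/- For μ ∈ V let ℘(μ) denote the point of the closed dominant cone a₊ nearest to μ (which exists and is unique since a₊ is a nonempty closed convex set). Then ℘(μ) is the least element, with respect to the dominance order ≼, of the set {λ ∈ a₊ : μ ≼ λ}; that is, μ ≼ ℘(μ), ℘(μ) ∈ a₊, and ℘(μ) ≼ λ for every λ ∈ a₊ with μ ≼ λ. -/

import Mathlib

open RealInnerProductSpace

/-- With `(α i)` a basis of a real inner product space having pairwise nonpositive inner
products, `a₊ = {v | ∀ i, ⟪v, α i⟫ ≥ 0}` the closed dominant cone and `≼` the dominance
order (`μ ≼ λ` iff `λ − μ` is a nonnegative combination of the `α i`), the nearest point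
`p = ℘(μ)` of `a₊` to `μ` is the least element of `{λ ∈ a₊ | μ ≼ λ}`. -/
theorem stmt_6 {V : Type*} [NormedAddCommGroup V] [InnerProductSpace ℝ V]
    [FiniteDimensional ℝ V] {ι : Type*} [Fintype ι] (α : Module.Basis ι ℝ V)
    (hα : ∀ i j, i ≠ j → ⟪α i, α j⟫ ≤ 0)
    (μ p : V)
    (hp : ∀ i, 0 ≤ ⟪p, α i⟫)
    (hnear : ∀ x : V, (∀ i, 0 ≤ ⟪x, α i⟫) → ‖μ - p‖ ≤ ‖μ - x‖) :
    (∃ c : ι → ℝ, (∀ i, 0 ≤ c i) ∧ p - μ = ∑ i, c i • α i) ∧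
    ∀ lam : V, (∀ i, 0 ≤ ⟪lam, α i⟫) →
      (∃ c : ι → ℝ, (∀ i, 0 ≤ c i) ∧ lam - μ = ∑ i, c i • α i) →
      ∃ c : ι → ℝ, (∀ i, 0 ≤ c i) ∧ lam - p = ∑ i, c i • α i := by
  classical
  -- Step 1: obtuse-angle characterization of the nearest point.
  have key : ∀ x : V, (∀ i, 0 ≤ ⟪x, α i⟫) → ⟪μ - p, x - p⟫ ≤ 0 := by
    intro x hx
    by_contra h
    push_neg at h
    set a : ℝ := ⟪μ - p, x - p⟫ with ha
    have hxpne : x - p ≠ 0 := by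
      intro h0
      rw [ha, h0, inner_zero_right] at h
      exact lt_irrefl _ h
    have hxp : (0:ℝ) < ‖x - p‖ ^ 2 := by
      have : 0 < ‖x - p‖ := norm_pos_iff.mpr hxpne
      positivity
    set t : ℝ := min 1 (a / ‖x - p‖ ^ 2) with htdef
    have ht0 : 0 < t := lt_min one_pos (div_pos h hxp)
    have ht1 : t ≤ 1 := min_le_left _ _
    have hta : t * ‖x - p‖ ^ 2 ≤ a := by
      calc t * ‖x - p‖ ^ 2 ≤ (a / ‖x - p‖ ^ 2) * ‖x - p‖ ^ 2 :=
            mul_le_mul_of_nonneg_right (min_le_right _ _) hxp.le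
        _ = a := div_mul_cancel₀ _ (ne_of_gt hxp)
    have hmem : ∀ i, 0 ≤ ⟪p + t • (x - p), α i⟫ := by
      intro i
      rw [inner_add_left, real_inner_smul_left, inner_sub_left]
      nlinarith [hp i, hx i]
    have hle := hnear _ hmem
    have hsq : ‖μ - p‖ ^ 2 ≤ ‖μ - p‖ ^ 2 - 2 * (t * a) + t ^ 2 * ‖x - p‖ ^ 2 := by
      calc ‖μ - p‖ ^ 2 ≤ ‖μ - (p + t • (x - p))‖ ^ 2 :=
            pow_le_pow_left₀ (norm_nonneg _) hle 2
        _ = ‖(μ - p) - t • (x - p)‖ ^ 2 := by rw [sub_add_eq_sub_sub]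
        _ = ‖μ - p‖ ^ 2 - 2 * ⟪μ - p, t • (x - p)⟫ + ‖t • (x - p)‖ ^ 2 :=
            norm_sub_sq_real _ _
        _ = ‖μ - p‖ ^ 2 - 2 * (t * a) + t ^ 2 * ‖x - p‖ ^ 2 := by
            rw [real_inner_smul_right, norm_smul, mul_pow, Real.norm_eq_abs, sq_abs, ha]
    nlinarith [mul_le_mul_of_nonneg_left hta ht0.le, mul_pos ht0 h]
  -- ⟪μ - p, p⟫ = 0
  have hp0 : ⟪μ - p, p⟫ = 0 := by
    have h1 := key 0 (fun i => by rw [inner_zero_left])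
    rw [zero_sub, inner_neg_right] at h1
    have h2 := key ((2:ℝ) • p) (fun i => by
      rw [real_inner_smul_left]; linarith [hp i])
    have h3 : (2:ℝ) • p - p = p := by
      rw [two_smul]; abel
    rw [h3] at h2
    linarith
  have hneg : ∀ x : V, (∀ i, 0 ≤ ⟪x, α i⟫) → ⟪μ - p, x⟫ ≤ 0 := by
    intro x hx
    have := key x hx
    rw [inner_sub_right, hp0] at this
    linarith
  -- coordinates of p - μ
  set c : ι → ℝ := fun i => α.repr (p - μ) i with hcdef
  have hrepr : p - μ = ∑ i, c i • α i := (α.sum_repr _).symm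
  have hc : ∀ i, 0 ≤ c i := by
    intro j
    set ω : V := (InnerProductSpace.toDual ℝ V).symm
      (LinearMap.toContinuousLinearMap (α.coord j)) with hω
    have hωap : ∀ y : V, ⟪ω, y⟫ = α.repr y j := by
      intro y
      rw [hω, InnerProductSpace.toDual_symm_apply]; rfl
    have hωmem : ∀ i, 0 ≤ ⟪ω, α i⟫ := by
      intro i
      rw [hωap, Module.Basis.repr_self, Finsupp.single_apply]
      split <;> norm_num
    have h1 := hneg ω hωmem
    have h2 : ⟪ω, μ - p⟫ ≤ 0 := by rw [real_inner_comm]; exact h1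
    have h3 : ⟪ω, p - μ⟫ = -⟪ω, μ - p⟫ := by
      rw [← inner_neg_right]; congr 1; abel
    have h4 : ⟪ω, p - μ⟫ = c j := hωap _
    linarith
  -- complementary slackness
  have slack : ∀ i, c i * ⟪α i, p⟫ = 0 := by
    have hpmz : ⟪p - μ, p⟫ = 0 := by
      rw [show p - μ = -(μ - p) by abel, inner_neg_left, hp0, neg_zero]
    have hsum : ∑ i, c i * ⟪α i, p⟫ = 0 := by
      calc ∑ i, c i * ⟪α i, p⟫ = ⟪∑ i, c i • α i, p⟫ := by
            rw [sum_inner]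
            exact Finset.sum_congr rfl fun i _ => (real_inner_smul_left _ _ _).symm
        _ = ⟪p - μ, p⟫ := by rw [← hrepr]
        _ = 0 := hpmz
    intro i
    exact (Finset.sum_eq_zero_iff_of_nonneg (fun i _ =>
      mul_nonneg (hc i) (by rw [real_inner_comm]; exact hp i))).mp hsum i (Finset.mem_univ i)
  refine ⟨⟨c, hc, hrepr⟩, ?_⟩
  -- Step 2: minimality.
  rintro lam hlam ⟨c', hc', heq'⟩
  set b : ι → ℝ := fun i => α.repr (lam - p) i with hbdef
  have hbrepr : lam - p = ∑ i, b i • α i := (α.sum_repr _).symm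
  have hc'eq : ∀ i, α.repr (lam - μ) i = c' i := by
    intro i
    rw [heq']
    exact congrFun (α.repr_sum_self c') i
  have hbc : ∀ i, b i = c' i - c i := by
    intro i
    have h1 : b i = α.repr (lam - μ) i - α.repr (p - μ) i := by
      rw [hbdef]
      dsimp only
      rw [show lam - p = (lam - μ) - (p - μ) by abel, map_sub, Finsupp.sub_apply]
    rw [h1, hc'eq i]
  set S : Finset ι := Finset.univ.filter (fun i => b i < 0) with hS
  set v : V := ∑ i ∈ S, b i • α i with hv
  set w : V := ∑ i ∈ Sᶜ, b i • α i with hw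
  have hSneg : ∀ i ∈ S, b i < 0 := fun i hi => (Finset.mem_filter.mp hi).2
  have hScneg : ∀ i ∈ Sᶜ, 0 ≤ b i := by
    intro i hi
    have := Finset.mem_compl.mp hi
    rw [hS, Finset.mem_filter] at this
    push_neg at this
    exact this (Finset.mem_univ i)
  -- ⟪v, w⟫ ≥ 0
  have hvw : 0 ≤ ⟪v, w⟫ := by
    rw [hv, sum_inner]
    apply Finset.sum_nonneg
    intro i hi
    rw [real_inner_smul_left, hw, inner_sum]
    have hsumle : ∑ j ∈ Sᶜ, ⟪α i, b j • α j⟫ ≤ 0 := by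
      apply Finset.sum_nonpos
      intro j hj
      rw [real_inner_smul_right]
      have hij : i ≠ j := fun h => (Finset.mem_compl.mp hj) (h ▸ hi)
      nlinarith [hα i j hij, hScneg j hj]
    nlinarith [hSneg i hi]
  have hvlam : ⟪v, lam⟫ ≤ 0 := by
    rw [hv, sum_inner]
    apply Finset.sum_nonpos
    intro i hi
    rw [real_inner_smul_left]
    have h2 : 0 ≤ ⟪α i, lam⟫ := by rw [real_inner_comm]; exact hlam i
    nlinarith [hSneg i hi]
  have hvp : ⟪v, p⟫ = 0 := by
    rw [hv, sum_inner]
    apply Finset.sum_eq_zero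
    intro i hi
    rw [real_inner_smul_left]
    have hci : 0 < c i := by
      have h1 := hbc i
      have h2 := hSneg i hi
      have h3 := hc' i
      linarith
    have hpz : ⟪α i, p⟫ = 0 := by
      rcases mul_eq_zero.mp (slack i) with h | h
      · exact absurd h (ne_of_gt hci)
      · exact h
    rw [hpz, mul_zero]
  have hvz : v = 0 := by
    have hsplit : lam - p = v + w := by
      rw [hbrepr, hv, hw, Finset.sum_add_sum_compl]
    have h1 : ⟪v, lam - p⟫ = ⟪v, v⟫ + ⟪v, w⟫ := by
      rw [hsplit, inner_add_right]
    have h2 : ⟪v, lam - p⟫ = ⟪v, lam⟫ - ⟪v, p⟫ := inner_sub_right _ _ _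
    have h3 : ⟪v, v⟫ ≤ 0 := by linarith
    have h4 : (0:ℝ) ≤ ⟪v, v⟫ := real_inner_self_nonneg
    exact inner_self_eq_zero.mp (le_antisymm h3 h4)
  have hbnn : ∀ i, 0 ≤ b i := by
    intro i
    by_contra hcon
    push_neg at hcon
    have hiS : i ∈ S := by rw [hS, Finset.mem_filter]; exact ⟨Finset.mem_univ i, hcon⟩
    have hv2 : v = ∑ j, (if j ∈ S then b j else 0) • α j := by
      rw [hv]
      simp only [ite_smul, zero_smul]
      rw [Finset.sum_ite_mem, Finset.univ_inter]
    have hrv : α.repr v i = if i ∈ S then b i else 0 := by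
      rw [hv2]
      exact congrFun (α.repr_sum_self _) i
    rw [hvz, map_zero, if_pos hiS] at hrv
    simp at hrv
    linarith [hrv ▸ hcon]
  exact ⟨b, hbnn, hbrepr⟩
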